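/- Let f_n: ℝ^d → ℝ be convex differentiable functions converging pointwise to a convex differentiable function f on ℝ^d. Then ∇f_n converges to ∇f uniformly on every compact subset of ℝ^d. -/

import Mathlib

open Set Filter Metric

section Aux

variable {E : Type*} [NormedAddCommGroup E] [InnerProductSpace ℝ E] [CompleteSpace E]

private lemma inner_grad' (f : E → ℝ) (x v : E) (h : DifferentiableAt ℝ f x) :
    inner ℝ (gradient f x) v = fderiv ℝ f x v := by
  have := h.hasGradientAt
  rw [hasGradientAt_iff_hasFDerivAt] at this
  rw [this.fderiv]
  simp [InnerProductSpace.toDual_apply_apply]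

private lemma subgrad {f : E → ℝ} (hc : ConvexOn ℝ Set.univ f) (hd : Differentiable ℝ f)
    (x y : E) : f x + inner ℝ (gradient f x) (y - x) ≤ f y := by
  set φ : ℝ → ℝ := fun t => f (x + t • (y - x)) with hφ
  have hφc : ConvexOn ℝ Set.univ φ := by
    have := hc.comp_affineMap (AffineMap.lineMap x y : ℝ →ᵃ[ℝ] E)
    have he : φ = f ∘ (AffineMap.lineMap x y : ℝ →ᵃ[ℝ] E) := by
      funext t; simp [φ, AffineMap.lineMap_apply, add_comm]
    rw [he]
    simpa using this
  have hline : ∀ t : ℝ, HasDerivAt (fun t : ℝ => x + t • (y - x)) (y - x) t := by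
    intro t
    simpa using ((hasDerivAt_id t).smul_const (y - x)).const_add x
  have hφd : ∀ t, HasDerivAt φ (fderiv ℝ f (x + t • (y - x)) (y - x)) t := fun t =>
    ((hd _).hasFDerivAt.comp_hasDerivAt t (hline t))
  have key := hφc.deriv_le_slope (mem_univ (0:ℝ)) (mem_univ (1:ℝ)) one_pos (hφd 0).differentiableAt
  rw [(hφd 0).deriv] at key
  have hs : slope φ 0 1 = f y - f x := by simp [slope, φ]
  rw [hs] at key
  have hg : (inner ℝ (gradient f x) (y - x) : ℝ) = fderiv ℝ f x (y - x) := inner_grad' f x _ (hd x)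
  simp only [zero_smul, add_zero] at key
  rw [hg]; linarith

private lemma subgrad_unique {f : E → ℝ} {x : E} (hd : DifferentiableAt ℝ f x) (v : E)
    (h : ∀ y, f x + inner ℝ v (y - x) ≤ f y) : v = gradient f x := by
  set u : E := v - gradient f x with hu
  set ψ : ℝ → ℝ := fun t => f (x + t • u) - f x - t * inner ℝ v u with hψ
  have hline : ∀ t : ℝ, HasDerivAt (fun t : ℝ => x + t • u) u t := by
    intro t; simpa using ((hasDerivAt_id t).smul_const u).const_add x
  have hψd : HasDerivAt ψ (fderiv ℝ f x u - inner ℝ v u) 0 := by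
    have h1 : HasDerivAt (fun t : ℝ => f (x + t • u)) (fderiv ℝ f x u) 0 := by
      have h0 : HasFDerivAt f (fderiv ℝ f x) (x + (0:ℝ) • u) := by
        simpa using hd.hasFDerivAt
      exact h0.comp_hasDerivAt 0 (hline 0)
    have h2 := (h1.sub_const (f x)).sub ((hasDerivAt_id (0:ℝ)).const_mul (inner ℝ v u : ℝ))
    convert h2 using 1
    · rfl
    · rfl
    · rw [hψ]; funext t; simp only [Pi.sub_apply, id]; ring
    · rw [mul_one]
  have hmin : IsLocalMin ψ 0 := by
    filter_upwards [univ_mem] with t _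
    have := h (x + t • u)
    simp only [ψ]
    simp only [add_sub_cancel_left, inner_smul_right] at this ⊢
    simp [hψ]
    linarith
  have hz := hmin.deriv_eq_zero
  rw [hψd.deriv] at hz
  have hg : (inner ℝ (gradient f x) u : ℝ) = fderiv ℝ f x u := inner_grad' f x _ hd
  have : (inner ℝ u u : ℝ) = 0 := by
    have : (inner ℝ v u : ℝ) - inner ℝ (gradient f x) u = 0 := by rw [hg]; linarith
    rwa [← inner_sub_left, ← hu] at this
  have : u = 0 := by rwa [inner_self_eq_zero] at this
  rw [hu] at this
  exact sub_eq_zero.mp this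

private lemma grad_bound {f : E → ℝ} (hc : ConvexOn ℝ Set.univ f) (hd : Differentiable ℝ f)
    {x : E} {r C c : ℝ} (hr : 0 < r) (hb : ∀ y ∈ closedBall x r, f y ≤ C)
    (hl : c ≤ f x) : ‖gradient f x‖ ≤ (C - c) / r := by
  have hxC : f x ≤ C := hb x (mem_closedBall_self hr.le)
  rcases eq_or_ne (gradient f x) 0 with h0 | h0
  · rw [h0, norm_zero]
    exact div_nonneg (by linarith) hr.le
  · set v := gradient f x
    have hnv : 0 < ‖v‖ := norm_pos_iff.mpr h0
    set z := x + (r / ‖v‖) • v with hz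
    have hzmem : z ∈ closedBall x r := by
      simp only [hz, mem_closedBall, dist_eq_norm, add_sub_cancel_left, norm_smul]
      rw [Real.norm_eq_abs, abs_of_nonneg (by positivity)]
      field_simp
      exact le_refl _
    have hkey := subgrad hc hd x z
    have : inner ℝ v (z - x) = r * ‖v‖ := by
      simp only [hz, add_sub_cancel_left, inner_smul_right, real_inner_self_eq_norm_sq]
      field_simp
    rw [this] at hkey
    have := hb z hzmem
    rw [le_div_iff₀ hr, mul_comm]
    nlinarith

private lemma lip_est {f : E → ℝ} (hc : ConvexOn ℝ Set.univ f) (hd : Differentiable ℝ f)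
    {y₁ y₂ : E} {L : ℝ} (h1 : ‖gradient f y₁‖ ≤ L) (h2 : ‖gradient f y₂‖ ≤ L) :
    |f y₁ - f y₂| ≤ L * ‖y₁ - y₂‖ := by
  have A := subgrad hc hd y₁ y₂
  have B := subgrad hc hd y₂ y₁
  have hA : |(inner ℝ (gradient f y₁) (y₂ - y₁) : ℝ)| ≤ ‖gradient f y₁‖ * ‖y₂ - y₁‖ :=
    abs_real_inner_le_norm _ _
  have hB : |(inner ℝ (gradient f y₂) (y₁ - y₂) : ℝ)| ≤ ‖gradient f y₂‖ * ‖y₁ - y₂‖ :=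
    abs_real_inner_le_norm _ _
  have hrev : ‖y₂ - y₁‖ = ‖y₁ - y₂‖ := norm_sub_rev _ _
  rw [hrev] at hA
  have hnn : (0:ℝ) ≤ ‖y₁ - y₂‖ := norm_nonneg _
  rw [abs_le] at hA hB ⊢
  constructor
  · nlinarith [hB.1, hB.2]
  · nlinarith [hA.1, hA.2]

variable [FiniteDimensional ℝ E]

private lemma local_upper_bound {f : ℕ → E → ℝ} {g : E → ℝ}
    (hconv : ∀ n, ConvexOn ℝ Set.univ (f n))
    (hpt : ∀ x, Tendsto (fun n => f n x) atTop (nhds (g x))) (a : E) :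
    ∃ ρ > (0:ℝ), ∃ C : ℝ, ∀ᶠ n in atTop, ∀ y ∈ closedBall a ρ, f n y ≤ C := by
  obtain ⟨b, hab, -⟩ := exists_mem_interior_convexHull_affineBasis
    (univ_mem : (univ : Set E) ∈ nhds a)
  obtain ⟨ρ, hρ, hball⟩ := Metric.isOpen_iff.mp isOpen_interior a hab
  obtain ⟨C, hC⟩ := Finite.exists_le (fun i => g (b i))
  refine ⟨ρ/2, by positivity, C + 1, ?_⟩
  have hev : ∀ᶠ n in atTop, ∀ i, f n (b i) ≤ C + 1 := by
    rw [eventually_all]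
    intro i
    exact (hpt (b i)).eventually (eventually_le_nhds (by linarith [hC i] : g (b i) < C + 1))
  filter_upwards [hev] with n hn y hy
  have hyhull : y ∈ convexHull ℝ (range b) := by
    have : y ∈ ball a ρ := mem_ball.mpr (lt_of_le_of_lt (mem_closedBall.mp hy) (by linarith))
    exact interior_subset (hball this)
  obtain ⟨z, hz, hle⟩ := (hconv n).exists_ge_of_mem_convexHull (subset_univ _) hyhull
  obtain ⟨i, rfl⟩ := hz
  exact hle.trans (hn i)

end Aux

theorem stmt12 {d : ℕ} (f : ℕ → EuclideanSpace ℝ (Fin d) → ℝ)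
    (g : EuclideanSpace ℝ (Fin d) → ℝ)
    (hconv : ∀ n, ConvexOn ℝ Set.univ (f n)) (hgconv : ConvexOn ℝ Set.univ g)
    (hdiff : ∀ n, Differentiable ℝ (f n)) (hgdiff : Differentiable ℝ g)
    (hpt : ∀ x, Filter.Tendsto (fun n => f n x) Filter.atTop (nhds (g x))) :
    ∀ K : Set (EuclideanSpace ℝ (Fin d)), IsCompact K →
      TendstoUniformlyOn (fun n => gradient (f n)) (gradient g) Filter.atTop K := by
  intro K hK
  by_contra hcon
  rw [Metric.tendstoUniformlyOn_iff] at hcon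
  push_neg at hcon
  obtain ⟨ε, hε, hfreq⟩ := hcon
  have hfreq' : ∃ᶠ n in atTop, ∃ x ∈ K, ε ≤ dist (gradient g x) (gradient (f n) x) :=
    hfreq
  obtain ⟨φ, hφmono, hφ2⟩ := Filter.extraction_of_frequently_atTop hfreq'
  choose x hxK hxd using hφ2
  obtain ⟨a, haK, ψ, hψmono, hza⟩ := hK.tendsto_subseq hxK
  set m : ℕ → ℕ := φ ∘ ψ with hm_def
  set z : ℕ → EuclideanSpace ℝ (Fin d) := x ∘ ψ with hz_def
  have hmmono : StrictMono m := hφmono.comp hψmono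
  have hm : Tendsto m atTop atTop := hmmono.tendsto_atTop
  -- local bounds around a
  obtain ⟨ρ, hρ, C, hC⟩ := local_upper_bound hconv hpt a
  set c : ℝ := 2 * (g a - 1) - C with hc_def
  have hlow : ∀ᶠ n in atTop, ∀ y ∈ closedBall a ρ, c ≤ f n y := by
    have h1 : ∀ᶠ n in atTop, g a - 1 ≤ f n a :=
      (hpt a).eventually (eventually_ge_nhds (by linarith))
    filter_upwards [hC, h1] with n hn h1 y hy
    have hy' : (2:ℝ) • a - y ∈ closedBall a ρ := by
      rw [mem_closedBall, dist_eq_norm] at hy ⊢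
      have : (2:ℝ) • a - y - a = -(y - a) := by module
      rw [this, norm_neg]
      exact hy
    have hcx := (hconv n).2 (mem_univ y) (mem_univ ((2:ℝ) • a - y))
      (by norm_num : (0:ℝ) ≤ 1/2) (by norm_num : (0:ℝ) ≤ 1/2) (by norm_num)
    have hmid : (1/2 : ℝ) • y + (1/2 : ℝ) • ((2:ℝ) • a - y) = a := by module
    rw [hmid] at hcx
    have := hn ((2:ℝ) • a - y) hy'
    simp only [smul_eq_mul] at hcx
    linarith
  set L : ℝ := (C - c) / (ρ / 2) with hL_def
  have hgradb : ∀ᶠ n in atTop, ∀ y ∈ closedBall a (ρ/2), ‖gradient (f n) y‖ ≤ L := by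
    filter_upwards [hC, hlow] with n hn hl y hy
    have hsub : closedBall y (ρ/2) ⊆ closedBall a ρ := by
      apply closedBall_subset_closedBall'
      rw [mem_closedBall] at hy
      linarith
    have hymem : y ∈ closedBall a ρ :=
      closedBall_subset_closedBall (by linarith) hy
    exact grad_bound (hconv n) (hdiff n) (by positivity)
      (fun w hw => hn w (hsub hw)) (hl y hymem)
  -- gradient bound for g
  obtain ⟨Cg, hCg⟩ := (isCompact_closedBall a ρ).exists_bound_of_continuousOn
    (hgdiff.continuous.continuousOn (s := closedBall a ρ))
  set Lg : ℝ := (Cg - (-Cg)) / (ρ/2) with hLg_def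
  have hggradb : ∀ y ∈ closedBall a (ρ/2), ‖gradient g y‖ ≤ Lg := by
    intro y hy
    have hsub : closedBall y (ρ/2) ⊆ closedBall a ρ := by
      apply closedBall_subset_closedBall'
      rw [mem_closedBall] at hy
      linarith
    have hymem : y ∈ closedBall a ρ := closedBall_subset_closedBall (by linarith) hy
    refine grad_bound hgconv hgdiff (by positivity)
      (fun w hw => (le_of_abs_le ((Real.norm_eq_abs _) ▸ hCg w (hsub hw)))) ?_
    have := hCg y hymem
    rw [Real.norm_eq_abs, abs_le] at this
    linarith [this.1]
  -- sequences of gradients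
  set v : ℕ → EuclideanSpace ℝ (Fin d) := fun k => gradient (f (m k)) (z k) with hv_def
  set w : ℕ → EuclideanSpace ℝ (Fin d) := fun k => gradient g (z k) with hw_def
  have hεk : ∀ k, ε ≤ dist (w k) (v k) := fun k => hxd (ψ k)
  have hzmem : ∀ᶠ k in atTop, z k ∈ closedBall a (ρ/2) :=
    hza (closedBall_mem_nhds a (by positivity))
  have hvball : ∀ᶠ k in atTop, v k ∈ closedBall (0 : EuclideanSpace ℝ (Fin d)) L := by
    filter_upwards [hzmem, hm.eventually hgradb] with k hk hb
    rw [mem_closedBall, dist_zero_right]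
    exact hb (z k) hk
  obtain ⟨vv, hvvmem, θ₁, hθ₁, hvlim⟩ :=
    (isCompact_closedBall (0 : EuclideanSpace ℝ (Fin d)) L).tendsto_subseq' hvball.frequently
  have hwball : ∀ᶠ k in atTop, (w ∘ θ₁) k ∈ closedBall (0 : EuclideanSpace ℝ (Fin d)) Lg := by
    filter_upwards [hθ₁.tendsto_atTop.eventually hzmem] with k hk
    rw [mem_closedBall, dist_zero_right]
    exact hggradb _ hk
  obtain ⟨ww, hwwmem, θ₂, hθ₂, hwlim⟩ :=
    (isCompact_closedBall (0 : EuclideanSpace ℝ (Fin d)) Lg).tendsto_subseq' hwball.frequently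
  set θ : ℕ → ℕ := θ₁ ∘ θ₂ with hθ_def
  have hθmono : StrictMono θ := hθ₁.comp hθ₂
  have hθtop : Tendsto θ atTop atTop := hθmono.tendsto_atTop
  have hzθ : Tendsto (z ∘ θ) atTop (nhds a) := hza.comp hθtop
  have hvθ : Tendsto (v ∘ θ) atTop (nhds vv) := hvlim.comp hθ₂.tendsto_atTop
  have hwθ : Tendsto (w ∘ θ) atTop (nhds ww) := hwlim
  have hmθ : Tendsto (m ∘ θ) atTop atTop := hm.comp hθtop
  -- ww = gradient g a
  have hw_eq : ww = gradient g a := by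
    apply subgrad_unique (hgdiff a) ww
    intro y
    have hterm : ∀ k, g (z (θ k)) + inner ℝ (w (θ k)) (y - z (θ k)) ≤ g y := fun k =>
      subgrad hgconv hgdiff (z (θ k)) y
    have hlim : Tendsto (fun k => g (z (θ k)) + inner ℝ (w (θ k)) (y - z (θ k)))
        atTop (nhds (g a + inner ℝ ww (y - a))) := by
      apply Tendsto.add
      · exact (hgdiff.continuous.tendsto a).comp hzθ
      · exact Filter.Tendsto.inner hwθ (tendsto_const_nhds.sub hzθ)
    exact le_of_tendsto hlim (Eventually.of_forall hterm)
  -- vv = gradient g a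
  have hv_eq : vv = gradient g a := by
    apply subgrad_unique (hgdiff a) vv
    intro y
    have hterm : ∀ k, f (m (θ k)) (z (θ k)) + inner ℝ (v (θ k)) (y - z (θ k)) ≤ f (m (θ k)) y :=
      fun k => subgrad (hconv _) (hdiff _) (z (θ k)) y
    have hfa : Tendsto (fun k => f (m (θ k)) a) atTop (nhds (g a)) := (hpt a).comp hmθ
    have hdiffz : Tendsto (fun k => f (m (θ k)) (z (θ k)) - f (m (θ k)) a) atTop (nhds 0) := by
      apply squeeze_zero_norm' (a := fun k => L * ‖z (θ k) - a‖)
      · filter_upwards [hθtop.eventually hzmem, (hmθ.eventually hgradb)] with k hk hb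
        have hamem : a ∈ closedBall a (ρ/2) := mem_closedBall_self (by positivity)
        exact lip_est (hconv _) (hdiff _) (hb _ hk) (hb a hamem)
      · have : Tendsto (fun k => z (θ k) - a) atTop (nhds 0) := by
          simpa using hzθ.sub (tendsto_const_nhds (x := a))
        simpa using (tendsto_const_nhds (x := L)).mul this.norm
    have hfz : Tendsto (fun k => f (m (θ k)) (z (θ k))) atTop (nhds (g a)) := by
      have := hdiffz.add hfa
      simpa using this
    have hlim : Tendsto (fun k => f (m (θ k)) (z (θ k)) + inner ℝ (v (θ k)) (y - z (θ k)))
        atTop (nhds (g a + inner ℝ vv (y - a))) :=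
      hfz.add (Filter.Tendsto.inner hvθ (tendsto_const_nhds.sub hzθ))
    have hry : Tendsto (fun k => f (m (θ k)) y) atTop (nhds (g y)) := (hpt y).comp hmθ
    exact le_of_tendsto_of_tendsto' hlim hry hterm
  -- contradiction
  have hdist : Tendsto (fun k => dist (w (θ k)) (v (θ k))) atTop (nhds (dist ww vv)) :=
    hwθ.dist hvθ
  have : dist ww vv = 0 := by rw [hw_eq, hv_eq, dist_self]
  rw [this] at hdist
  have : ε ≤ 0 := ge_of_tendsto hdist (Eventually.of_forall fun k => hεk (θ k))
  linarith
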